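/- arXiv:1203.2846 — 2 statements merged into one kernel-verified Lean document; each statement's English description precedes it below -/
import Mathlib

section
/- The dynamic programming operator S is min-plus additive: for every finite nonempty index set I and every family of functions V_i : ℝⁿ → ℝ (i ∈ I), each bounded below, the pointwise minimum min_{i∈I} V_i is bounded below and S(min_{i∈I} V_i)(x) = min_{i∈I} (S V_i)(x) for all x ∈ ℝⁿ. -/
open Matrix

noncomputable section

/-- The dynamic programming operator
`(S V)(x) := inf_{w} [ V(A(x) + B w) + ½‖w‖²_Q + ½‖y − C(x)‖²_R ]`. -/
def dpOp {n p l : ℕ} (A : (Fin n → ℝ) → (Fin n → ℝ)) (B : Matrix (Fin n) (Fin p) ℝ)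
    (C : (Fin n → ℝ) → (Fin l → ℝ)) (Q : Matrix (Fin p) (Fin p) ℝ)
    (R : Matrix (Fin l) (Fin l) ℝ) (y : Fin l → ℝ)
    (V : (Fin n → ℝ) → ℝ) (x : Fin n → ℝ) : ℝ :=
  sInf {c : ℝ | ∃ w : Fin p → ℝ,
    c = V (A x + B.mulVec w) + (1 / 2) * (w ⬝ᵥ Q.mulVec w)
        + (1 / 2) * ((y - C x) ⬝ᵥ R.mulVec (y - C x))}

/-- The dynamic programming operator is min-plus additive: for a finite nonempty family
of functions `V i`, each bounded below, the pointwise minimum is bounded below and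
`S(min_i V_i) = min_i S(V_i)` pointwise. -/
theorem dpOp_minPlus_additive {n p l : ℕ} (hn : 1 ≤ n) (hp : 1 ≤ p) (hl : 1 ≤ l)
    (A : (Fin n → ℝ) → (Fin n → ℝ)) (B : Matrix (Fin n) (Fin p) ℝ)
    (C : (Fin n → ℝ) → (Fin l → ℝ))
    (Q : Matrix (Fin p) (Fin p) ℝ) (R : Matrix (Fin l) (Fin l) ℝ)
    (hQ : Q.PosDef) (hR : R.PosDef) (y : Fin l → ℝ)
    (I : Type) [Fintype I] [Nonempty I]
    (V : I → (Fin n → ℝ) → ℝ) (hV : ∀ i, BddBelow (Set.range (V i))) :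
    BddBelow (Set.range fun x : Fin n → ℝ => ⨅ i, V i x) ∧
    ∀ x : Fin n → ℝ,
      dpOp A B C Q R y (fun z => ⨅ i, V i z) x = ⨅ i, dpOp A B C Q R y (V i) x := by
  choose b hb using hV
  have hbV : ∀ i z, b i ≤ V i z := fun i z => hb i ⟨z, rfl⟩
  set m := ⨅ i, b i with hm
  have hmV : ∀ i z, m ≤ V i z := fun i z =>
    (ciInf_le (Set.Finite.bddBelow (Set.finite_range b)) i).trans (hbV i z)
  have hminf : ∀ z, m ≤ ⨅ i, V i z := fun z => le_ciInf fun i => hmV i z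
  refine ⟨⟨m, by rintro c ⟨z, rfl⟩; exact hminf z⟩, ?_⟩
  intro x
  set c0 : ℝ := (1 / 2) * ((y - C x) ⬝ᵥ R.mulVec (y - C x)) with hc0
  set a : (Fin p → ℝ) → ℝ := fun w => (1 / 2) * (w ⬝ᵥ Q.mulVec w) + c0 with ha
  have hQ0 : ∀ w : Fin p → ℝ, 0 ≤ w ⬝ᵥ Q.mulVec w := by
    intro w
    have := hQ.posSemidef.dotProduct_mulVec_nonneg w
    simpa using this
  have hac : ∀ w, c0 ≤ a w := fun w => by
    simp only [ha]; nlinarith [hQ0 w]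
  set g : I → (Fin p → ℝ) → ℝ := fun i w => V i (A x + B.mulVec w) + a w with hg
  have key : ∀ W : (Fin n → ℝ) → ℝ,
      dpOp A B C Q R y W x = ⨅ w : Fin p → ℝ, (W (A x + B.mulVec w) + a w) := by
    intro W
    have hset : {c : ℝ | ∃ w : Fin p → ℝ,
        c = W (A x + B.mulVec w) + (1 / 2) * (w ⬝ᵥ Q.mulVec w)
          + (1 / 2) * ((y - C x) ⬝ᵥ R.mulVec (y - C x))}
        = Set.range (fun w : Fin p → ℝ => W (A x + B.mulVec w) + a w) := by
      ext c
      constructor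
      · rintro ⟨w, rfl⟩; exact ⟨w, by simp only [ha, hc0]; ring⟩
      · rintro ⟨w, rfl⟩; exact ⟨w, by simp only [ha, hc0]; ring⟩
    rw [dpOp, hset]; rfl
  rw [key]
  have hkey2 : ∀ i, dpOp A B C Q R y (V i) x = ⨅ w, g i w := fun i => key (V i)
  have hbddg : ∀ i, BddBelow (Set.range (g i)) := by
    intro i
    refine ⟨b i + c0, ?_⟩
    rintro c ⟨w, rfl⟩
    exact add_le_add (hbV i _) (hac w)
  have hbddF : BddBelow (Set.range fun w : Fin p → ℝ => (⨅ i, V i (A x + B.mulVec w)) + a w) := by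
    refine ⟨m + c0, ?_⟩
    rintro c ⟨w, rfl⟩
    exact add_le_add (hminf _) (hac w)
  have hbddI : BddBelow (Set.range fun i => ⨅ w, g i w) :=
    Set.Finite.bddBelow (Set.finite_range _)
  simp only [hkey2]
  apply le_antisymm
  · refine le_ciInf fun i => le_ciInf fun w => ?_
    calc (⨅ w, (⨅ j, V j (A x + B.mulVec w)) + a w)
        ≤ (⨅ j, V j (A x + B.mulVec w)) + a w := ciInf_le hbddF w
      _ ≤ g i w := add_le_add_left
          (ciInf_le (Set.Finite.bddBelow (Set.finite_range _)) i) _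
  · refine le_ciInf fun w => ?_
    obtain ⟨i0, hi0⟩ := Finite.exists_min fun i => V i (A x + B.mulVec w)
    have heq : (⨅ j, V j (A x + B.mulVec w)) = V i0 (A x + B.mulVec w) :=
      le_antisymm (ciInf_le (Set.Finite.bddBelow (Set.finite_range _)) i0) (le_ciInf hi0)
    calc (⨅ i, ⨅ w, g i w) ≤ ⨅ w, g i0 w := ciInf_le hbddI i0
      _ ≤ g i0 w := ciInf_le (hbddg i0) w
      _ = (⨅ j, V j (A x + B.mulVec w)) + a w := by rw [hg]; simp [heq]

end
end

section
/- The min-plus disturbance-propagation step preserves the min-of-quadratics structure: let I be a finite nonempty index set and let V : ℝⁿ → ℝ satisfy V(z) = min_{i ∈ I} ( ½ zᵀ N_i z + ℓ_iᵀ z + c_i ) for all z, where each N_i is an n×n real symmetric positive semidefinite matrix, ℓ_i ∈ ℝⁿ, c_i ∈ ℝ. Let Q be a p×p real symmetric positive definite matrix and B an n×p real matrix. Then for every a ∈ ℝⁿ, inf_{w ∈ ℝᵖ} [ V(a + B w) + ½ wᵀ Q w ] = min_{i ∈ I} ( ½ aᵀ h_i a + ℓ̃_iᵀ a + c̃_i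 ), where h_i := N_i − N_i B (Q + Bᵀ N_i B)⁻¹ Bᵀ N_i, ℓ̃_i := ℓ_i − N_i B (Q + Bᵀ N_i B)⁻¹ Bᵀ ℓ_i, and c̃_i := c_i − ½ ℓ_iᵀ B (Q + Bᵀ N_i B)⁻¹ Bᵀ ℓ_i; moreover each h_i is symmetric positive semidefinite. -/
open Matrix

noncomputable section

section Helpers

lemma real_conjT {k m : Type*} (A : Matrix k m ℝ) : Aᴴ = Aᵀ := by
  ext i j; simp [conjTranspose_apply]

lemma dp_move {k m : Type*} [Fintype k] [Fintype m] (A : Matrix k m ℝ)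
    (x : k → ℝ) (y : m → ℝ) : x ⬝ᵥ A *ᵥ y = y ⬝ᵥ Aᵀ *ᵥ x := by
  rw [dotProduct_mulVec, mulVec_transpose, dotProduct_comm]

lemma dp_shift {k m : Type*} [Fintype k] [Fintype m] (A : Matrix k m ℝ)
    (x : m → ℝ) (z : k → ℝ) : (A *ᵥ x) ⬝ᵥ z = x ⬝ᵥ Aᵀ *ᵥ z := by
  rw [dotProduct_comm, dp_move]

/-- Completion of squares identity. -/
lemma key_identity {n p : ℕ} (Nm : Matrix (Fin n) (Fin n) ℝ) (hNs : Nmᵀ = Nm)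
    (Q : Matrix (Fin p) (Fin p) ℝ) (hQs : Qᵀ = Q)
    (B : Matrix (Fin n) (Fin p) ℝ) (K : Matrix (Fin p) (Fin p) ℝ)
    (hKs : Kᵀ = K) (hMK : (Q + Bᵀ * Nm * B) * K = 1)
    (l : Fin n → ℝ) (c : ℝ) (a : Fin n → ℝ) (w : Fin p → ℝ) :
    (1 / 2) * ((a + B *ᵥ w) ⬝ᵥ Nm *ᵥ (a + B *ᵥ w)) + l ⬝ᵥ (a + B *ᵥ w) + c
      + (1 / 2) * (w ⬝ᵥ Q *ᵥ w)
    = ((1 / 2) * (a ⬝ᵥ (Nm - Nm * B * K * Bᵀ * Nm) *ᵥ a)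
        + (l - (Nm * B * K * Bᵀ) *ᵥ l) ⬝ᵥ a
        + (c - (1 / 2) * (l ⬝ᵥ (B * K * Bᵀ) *ᵥ l)))
      + (1 / 2) * ((w + K *ᵥ (Bᵀ *ᵥ (Nm *ᵥ a + l))) ⬝ᵥ (Q + Bᵀ * Nm * B) *ᵥ
          (w + K *ᵥ (Bᵀ *ᵥ (Nm *ᵥ a + l)))) := by
  set M := Q + Bᵀ * Nm * B with hM
  have hMs : Mᵀ = M := by
    simp [hM, transpose_add, transpose_mul, hNs, hQs, Matrix.mul_assoc]
  have hKM : K * M = 1 := mul_eq_one_comm.mp hMK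
  set b : Fin p → ℝ := Bᵀ *ᵥ (Nm *ᵥ a + l) with hb
  have hMKb : M *ᵥ (K *ᵥ b) = b := by
    rw [mulVec_mulVec, hMK, one_mulVec]
  -- expand the square term
  have e1 : (w + K *ᵥ b) ⬝ᵥ M *ᵥ (w + K *ᵥ b)
      = w ⬝ᵥ M *ᵥ w + 2 * (w ⬝ᵥ b) + b ⬝ᵥ K *ᵥ b := by
    have h2 : (K *ᵥ b) ⬝ᵥ M *ᵥ w = w ⬝ᵥ b := by
      conv_lhs => rw [dp_shift, hKs, mulVec_mulVec, hKM, one_mulVec]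
      exact dotProduct_comm b w
    have h3 : (K *ᵥ b) ⬝ᵥ M *ᵥ (K *ᵥ b) = b ⬝ᵥ K *ᵥ b := by
      conv_lhs => rw [hMKb, dp_shift, hKs]
    have h4 : w ⬝ᵥ M *ᵥ (K *ᵥ b) = w ⬝ᵥ b := by conv_lhs => rw [hMKb]
    simp only [add_dotProduct, mulVec_add, dotProduct_add, h2, h3, h4]
    ring
  -- expand b ⬝ᵥ K b
  have hBt : ∀ (x : Fin n → ℝ) (y : Fin n → ℝ),
      (Bᵀ *ᵥ x) ⬝ᵥ K *ᵥ (Bᵀ *ᵥ y) = x ⬝ᵥ (B * K * Bᵀ) *ᵥ y := by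
    intro x y
    conv_lhs => rw [mulVec_mulVec, dp_shift, transpose_transpose, mulVec_mulVec]
    simp [Matrix.mul_assoc]
  have e2 : b ⬝ᵥ K *ᵥ b = a ⬝ᵥ (Nm * B * K * Bᵀ * Nm) *ᵥ a
      + 2 * (a ⬝ᵥ (Nm * B * K * Bᵀ) *ᵥ l) + l ⬝ᵥ (B * K * Bᵀ) *ᵥ l := by
    have c1 : (Nm *ᵥ a) ⬝ᵥ (B * K * Bᵀ) *ᵥ (Nm *ᵥ a)
        = a ⬝ᵥ (Nm * B * K * Bᵀ * Nm) *ᵥ a := by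
      conv_lhs => rw [dp_shift, hNs, mulVec_mulVec, mulVec_mulVec]
      simp [Matrix.mul_assoc]
    have c2 : (Nm *ᵥ a) ⬝ᵥ (B * K * Bᵀ) *ᵥ l = a ⬝ᵥ (Nm * B * K * Bᵀ) *ᵥ l := by
      conv_lhs => rw [dp_shift, hNs, mulVec_mulVec]
      simp [Matrix.mul_assoc]
    have c3 : l ⬝ᵥ (B * K * Bᵀ) *ᵥ (Nm *ᵥ a) = a ⬝ᵥ (Nm * B * K * Bᵀ) *ᵥ l := by
      conv_lhs => rw [mulVec_mulVec, dp_move]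
      simp [transpose_mul, transpose_transpose, hNs, hKs, Matrix.mul_assoc]
    simp only [hb, mulVec_add, dotProduct_add, add_dotProduct, hBt, c1, c2, c3]
    ring
  -- expand w ⬝ᵥ b
  have e3 : w ⬝ᵥ b = a ⬝ᵥ (Nm * B) *ᵥ w + l ⬝ᵥ B *ᵥ w := by
    have d1 : w ⬝ᵥ Bᵀ *ᵥ (Nm *ᵥ a) = a ⬝ᵥ (Nm * B) *ᵥ w := by
      conv_lhs => rw [mulVec_mulVec, dp_move]
      simp [transpose_mul, transpose_transpose, hNs]
    have d2 : w ⬝ᵥ Bᵀ *ᵥ l = l ⬝ᵥ B *ᵥ w := by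
      conv_lhs => rw [dp_move, transpose_transpose]
    rw [hb, mulVec_add, dotProduct_add, d1, d2]
  -- expand left-hand side quadratic
  have e4 : (a + B *ᵥ w) ⬝ᵥ Nm *ᵥ (a + B *ᵥ w)
      = a ⬝ᵥ Nm *ᵥ a + 2 * (a ⬝ᵥ (Nm * B) *ᵥ w) + w ⬝ᵥ (Bᵀ * Nm * B) *ᵥ w := by
    have f1 : (B *ᵥ w) ⬝ᵥ Nm *ᵥ a = a ⬝ᵥ (Nm * B) *ᵥ w := by
      conv_lhs => rw [dp_shift, mulVec_mulVec, dp_move]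
      simp [transpose_mul, transpose_transpose, hNs]
    have f2 : a ⬝ᵥ Nm *ᵥ (B *ᵥ w) = a ⬝ᵥ (Nm * B) *ᵥ w := by
      rw [mulVec_mulVec]
    have f3 : (B *ᵥ w) ⬝ᵥ Nm *ᵥ (B *ᵥ w) = w ⬝ᵥ (Bᵀ * Nm * B) *ᵥ w := by
      conv_lhs => rw [dp_shift, mulVec_mulVec, mulVec_mulVec]
    simp only [add_dotProduct, mulVec_add, dotProduct_add, f1, f2, f3]
    ring
  have e5 : (l - (Nm * B * K * Bᵀ) *ᵥ l) ⬝ᵥ a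
      = l ⬝ᵥ a - a ⬝ᵥ (Nm * B * K * Bᵀ) *ᵥ l := by
    rw [sub_dotProduct, dotProduct_comm ((Nm * B * K * Bᵀ) *ᵥ l) a]
  have e6 : a ⬝ᵥ (Nm - Nm * B * K * Bᵀ * Nm) *ᵥ a
      = a ⬝ᵥ Nm *ᵥ a - a ⬝ᵥ (Nm * B * K * Bᵀ * Nm) *ᵥ a := by
    rw [sub_mulVec, dotProduct_sub]
  have e7 : l ⬝ᵥ (a + B *ᵥ w) = l ⬝ᵥ a + l ⬝ᵥ B *ᵥ w := by
    rw [dotProduct_add]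
  have e8 : w ⬝ᵥ M *ᵥ w = w ⬝ᵥ Q *ᵥ w + w ⬝ᵥ (Bᵀ * Nm * B) *ᵥ w := by
    rw [hM, add_mulVec, dotProduct_add]
  rw [e1, e2, e3, e4, e5, e6, e7, e8]
  ring

end Helpers

/-- The min-plus disturbance-propagation step preserves the min-of-quadratics
structure: if `V(z) = min_i (½ zᵀ N_i z + ℓ_iᵀ z + c_i)` with each `N_i` symmetric
positive semidefinite and `Q` symmetric positive definite, then for every `a`,
`inf_w [V(a + B w) + ½ wᵀ Q w] = min_i (½ aᵀ h_i a + ℓ̃_iᵀ a + c̃_i)` with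
`h_i = N_i − N_i B (Q + Bᵀ N_i B)⁻¹ Bᵀ N_i`,
`ℓ̃_i = ℓ_i − N_i B (Q + Bᵀ N_i B)⁻¹ Bᵀ ℓ_i`,
`c̃_i = c_i − ½ ℓ_iᵀ B (Q + Bᵀ N_i B)⁻¹ Bᵀ ℓ_i`; moreover each `h_i` is symmetric
positive semidefinite. -/
theorem minPlus_propagation_preserves_minQuadratics {n p : ℕ}
    (I : Type) [Fintype I] [Nonempty I]
    (N : I → Matrix (Fin n) (Fin n) ℝ) (hN : ∀ i, (N i).PosSemidef)
    (ell : I → Fin n → ℝ) (c : I → ℝ)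
    (V : (Fin n → ℝ) → ℝ)
    (hV : ∀ z, V z = ⨅ i, ((1 / 2) * (z ⬝ᵥ (N i).mulVec z) + ell i ⬝ᵥ z + c i))
    (Q : Matrix (Fin p) (Fin p) ℝ) (hQ : Q.PosDef)
    (B : Matrix (Fin n) (Fin p) ℝ) :
    (∀ a : Fin n → ℝ,
      sInf {r : ℝ | ∃ w : Fin p → ℝ,
          r = V (a + B.mulVec w) + (1 / 2) * (w ⬝ᵥ Q.mulVec w)} =
        ⨅ i, ((1 / 2) *
              (a ⬝ᵥ (N i - N i * B * (Q + Bᵀ * N i * B)⁻¹ * Bᵀ * N i).mulVec a)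
            + (ell i - (N i * B * (Q + Bᵀ * N i * B)⁻¹ * Bᵀ).mulVec (ell i)) ⬝ᵥ a
            + (c i - (1 / 2) *
                (ell i ⬝ᵥ (B * (Q + Bᵀ * N i * B)⁻¹ * Bᵀ).mulVec (ell i))))) ∧
    ∀ i, (N i - N i * B * (Q + Bᵀ * N i * B)⁻¹ * Bᵀ * N i).PosSemidef := by
  have hNt : ∀ i, (N i)ᵀ = N i := fun i => by
    have := (hN i).1; rwa [IsHermitian, real_conjT] at this
  have hQt : Qᵀ = Q := by
    have := hQ.1; rwa [IsHermitian, real_conjT] at this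
  have hMpd : ∀ i, (Q + Bᵀ * N i * B).PosDef := by
    intro i
    have hpsd : (Bᵀ * N i * B).PosSemidef := by
      have := (hN i).conjTranspose_mul_mul_same B
      rwa [real_conjT] at this
    exact hQ.add_posSemidef hpsd
  have hMK : ∀ i, (Q + Bᵀ * N i * B) * (Q + Bᵀ * N i * B)⁻¹ = 1 := fun i =>
    Matrix.mul_nonsing_inv _ ((hMpd i).det_pos.ne').isUnit
  have hKt : ∀ i, ((Q + Bᵀ * N i * B)⁻¹)ᵀ = (Q + Bᵀ * N i * B)⁻¹ := by
    intro i
    rw [transpose_nonsing_inv]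
    congr 1
    simp [transpose_add, transpose_mul, hNt, hQt, Matrix.mul_assoc]
  have key : ∀ (i : I) (l : Fin n → ℝ) (cc : ℝ) (a : Fin n → ℝ) (w : Fin p → ℝ),
      (1 / 2) * ((a + B *ᵥ w) ⬝ᵥ (N i) *ᵥ (a + B *ᵥ w)) + l ⬝ᵥ (a + B *ᵥ w) + cc
        + (1 / 2) * (w ⬝ᵥ Q *ᵥ w)
      = ((1 / 2) * (a ⬝ᵥ (N i - N i * B * (Q + Bᵀ * N i * B)⁻¹ * Bᵀ * N i) *ᵥ a)
          + (l - (N i * B * (Q + Bᵀ * N i * B)⁻¹ * Bᵀ) *ᵥ l) ⬝ᵥ a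
          + (cc - (1 / 2) * (l ⬝ᵥ (B * (Q + Bᵀ * N i * B)⁻¹ * Bᵀ) *ᵥ l)))
        + (1 / 2) * ((w + (Q + Bᵀ * N i * B)⁻¹ *ᵥ (Bᵀ *ᵥ ((N i) *ᵥ a + l))) ⬝ᵥ
            (Q + Bᵀ * N i * B) *ᵥ
            (w + (Q + Bᵀ * N i * B)⁻¹ *ᵥ (Bᵀ *ᵥ ((N i) *ᵥ a + l)))) :=
    fun i l cc a w =>
      key_identity (N i) (hNt i) Q hQt B _ (hKt i) (hMK i) l cc a w
  constructor
  · intro a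
    set r : I → ℝ := fun i =>
      (1 / 2) * (a ⬝ᵥ (N i - N i * B * (Q + Bᵀ * N i * B)⁻¹ * Bᵀ * N i) *ᵥ a)
        + (ell i - (N i * B * (Q + Bᵀ * N i * B)⁻¹ * Bᵀ) *ᵥ ell i) ⬝ᵥ a
        + (c i - (1 / 2) * (ell i ⬝ᵥ (B * (Q + Bᵀ * N i * B)⁻¹ * Bᵀ) *ᵥ ell i))
      with hr
    show sInf _ = ⨅ i, r i
    have hge : ∀ (i : I) (w : Fin p → ℝ), r i ≤
        (1 / 2) * ((a + B *ᵥ w) ⬝ᵥ (N i) *ᵥ (a + B *ᵥ w)) + ell i ⬝ᵥ (a + B *ᵥ w)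
          + c i + (1 / 2) * (w ⬝ᵥ Q *ᵥ w) := by
      intro i w
      have h0 : 0 ≤ (w + (Q + Bᵀ * N i * B)⁻¹ *ᵥ (Bᵀ *ᵥ ((N i) *ᵥ a + ell i))) ⬝ᵥ
          (Q + Bᵀ * N i * B) *ᵥ
          (w + (Q + Bᵀ * N i * B)⁻¹ *ᵥ (Bᵀ *ᵥ ((N i) *ᵥ a + ell i))) := by
        have := (hMpd i).posSemidef.dotProduct_mulVec_nonneg
          (w + (Q + Bᵀ * N i * B)⁻¹ *ᵥ (Bᵀ *ᵥ ((N i) *ᵥ a + ell i)))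
        simpa using this
      have hk := key i (ell i) (c i) a w
      rw [hk, hr]
      nlinarith [h0]
    have heq : ∀ i : I,
        (1 / 2) * ((a + B *ᵥ (-((Q + Bᵀ * N i * B)⁻¹ *ᵥ (Bᵀ *ᵥ ((N i) *ᵥ a + ell i))))) ⬝ᵥ
            (N i) *ᵥ (a + B *ᵥ (-((Q + Bᵀ * N i * B)⁻¹ *ᵥ (Bᵀ *ᵥ ((N i) *ᵥ a + ell i))))))
          + ell i ⬝ᵥ (a + B *ᵥ (-((Q + Bᵀ * N i * B)⁻¹ *ᵥ (Bᵀ *ᵥ ((N i) *ᵥ a + ell i)))))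
          + c i
          + (1 / 2) * ((-((Q + Bᵀ * N i * B)⁻¹ *ᵥ (Bᵀ *ᵥ ((N i) *ᵥ a + ell i)))) ⬝ᵥ
              Q *ᵥ (-((Q + Bᵀ * N i * B)⁻¹ *ᵥ (Bᵀ *ᵥ ((N i) *ᵥ a + ell i)))))
        = r i := by
      intro i
      have hk := key i (ell i) (c i) a
        (-((Q + Bᵀ * N i * B)⁻¹ *ᵥ (Bᵀ *ᵥ ((N i) *ᵥ a + ell i))))
      rw [hk, hr]
      simp [neg_add_cancel, Matrix.mulVec_zero, dotProduct_zero]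
    obtain ⟨j, hj⟩ := Finite.exists_min r
    have hrj : ⨅ i, r i = r j :=
      le_antisymm (ciInf_le (Set.finite_range r).bddBelow j) (le_ciInf hj)
    have hFg : ∀ w : Fin p → ℝ, V (a + B.mulVec w) + (1 / 2) * (w ⬝ᵥ Q.mulVec w)
        = (⨅ i, ((1 / 2) * ((a + B *ᵥ w) ⬝ᵥ (N i) *ᵥ (a + B *ᵥ w))
            + ell i ⬝ᵥ (a + B *ᵥ w) + c i)) + (1 / 2) * (w ⬝ᵥ Q *ᵥ w) := by
      intro w; rw [hV]
    rw [hrj]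
    apply le_antisymm
    · set w0 := -((Q + Bᵀ * N j * B)⁻¹ *ᵥ (Bᵀ *ᵥ ((N j) *ᵥ a + ell j))) with hw0
      have hmem : V (a + B.mulVec w0) + (1 / 2) * (w0 ⬝ᵥ Q.mulVec w0) ∈
          {x : ℝ | ∃ w : Fin p → ℝ,
            x = V (a + B.mulVec w) + (1 / 2) * (w ⬝ᵥ Q.mulVec w)} := ⟨w0, rfl⟩
      refine le_trans (csInf_le ?_ hmem) ?_
      · refine ⟨r j, ?_⟩
        rintro x ⟨w, rfl⟩
        rw [hFg w]
        have h2 : r j - (1 / 2) * (w ⬝ᵥ Q *ᵥ w) ≤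
            ⨅ i, ((1 / 2) * ((a + B *ᵥ w) ⬝ᵥ (N i) *ᵥ (a + B *ᵥ w))
              + ell i ⬝ᵥ (a + B *ᵥ w) + c i) :=
          le_ciInf fun i => by linarith [le_trans (hj i) (hge i w)]
        linarith [h2]
      · rw [hFg w0]
        have h3 : (⨅ i, ((1 / 2) * ((a + B *ᵥ w0) ⬝ᵥ (N i) *ᵥ (a + B *ᵥ w0))
              + ell i ⬝ᵥ (a + B *ᵥ w0) + c i)) ≤
            (1 / 2) * ((a + B *ᵥ w0) ⬝ᵥ (N j) *ᵥ (a + B *ᵥ w0))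
              + ell j ⬝ᵥ (a + B *ᵥ w0) + c j :=
          ciInf_le (Set.finite_range _).bddBelow j
        have h4 := heq j
        rw [← hw0] at h4
        linarith [h3, h4.le, h4.ge]
    · refine le_csInf ⟨V (a + B.mulVec 0) + (1 / 2) * ((0 : Fin p → ℝ) ⬝ᵥ Q.mulVec 0), 0, rfl⟩ ?_
      rintro x ⟨w, rfl⟩
      rw [hFg w]
      have h2 : r j - (1 / 2) * (w ⬝ᵥ Q *ᵥ w) ≤
          ⨅ i, ((1 / 2) * ((a + B *ᵥ w) ⬝ᵥ (N i) *ᵥ (a + B *ᵥ w))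
            + ell i ⬝ᵥ (a + B *ᵥ w) + c i) :=
        le_ciInf fun i => by linarith [le_trans (hj i) (hge i w)]
      linarith [h2]
  · intro i
    refine posSemidef_iff_dotProduct_mulVec.mpr ⟨?_, ?_⟩
    · show _ᴴ = _
      rw [real_conjT]
      simp only [transpose_sub, transpose_mul, transpose_transpose, hNt i, hKt i]
      simp [Matrix.mul_assoc]
    · intro x
      rw [star_trivial]
      have hid := key i 0 0 x
        (-((Q + Bᵀ * N i * B)⁻¹ *ᵥ (Bᵀ *ᵥ ((N i) *ᵥ x + 0))))
      simp only [add_zero, neg_add_cancel, Matrix.mulVec_zero, dotProduct_zero,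
        zero_dotProduct, mul_zero, zero_mul, sub_zero, zero_add] at hid
      set w0 := -((Q + Bᵀ * N i * B)⁻¹ *ᵥ (Bᵀ *ᵥ ((N i) *ᵥ x))) with hw0
      have h1 : 0 ≤ (x + B *ᵥ w0) ⬝ᵥ (N i) *ᵥ (x + B *ᵥ w0) := by
        have := (hN i).dotProduct_mulVec_nonneg (x + B *ᵥ w0); simpa using this
      have h2 : 0 ≤ w0 ⬝ᵥ Q *ᵥ w0 := by
        have := hQ.posSemidef.dotProduct_mulVec_nonneg w0; simpa using this
      linarith [hid, h1, h2]
end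
end
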